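/- Let P be a row-stochastic matrix on a finite set S and let C be a closed communicating class of P. Then there exists exactly one stationary distribution π of P with π(i) = 0 for all i ∉ C, and this π moreover satisfies π(i) > 0 for all i ∈ C. -/
import Mathlib


open Filter Topology

/-- A matrix is row-stochastic: nonnegative entries and each row sums to 1. -/
def RowStochastic {S : Type*} [Fintype S] (P : Matrix S S ℝ) : Prop :=
  (∀ i j, 0 ≤ P i j) ∧ ∀ i, ∑ j, P i j = 1

/-- A probability row vector `π` is a stationary distribution of `P`. -/
def StationaryDist {S : Type*} [Fintype S] (P : Matrix S S ℝ) (π : S → ℝ) : Prop :=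
  (∀ i, 0 ≤ π i) ∧ (∑ i, π i = 1) ∧ ∀ j, ∑ i, π i * P i j = π j

/-- A closed communicating class: a nonempty set which no transition leaves, and
within which every state leads to every other in some number `k ≥ 1` of steps. -/
def ClosedClass {S : Type*} [Fintype S] [DecidableEq S] (P : Matrix S S ℝ) (C : Set S) : Prop :=
  C.Nonempty ∧ (∀ i ∈ C, ∀ j, j ∉ C → P i j = 0) ∧
    ∀ i ∈ C, ∀ j ∈ C, ∃ k, 1 ≤ k ∧ 0 < (P ^ k) i j

/-- A subinvariant vector for a row-stochastic matrix is invariant. -/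
lemma subinv_to_inv {S : Type*} [Fintype S] (P : Matrix S S ℝ) (hP : RowStochastic P)
    (v : S → ℝ) (h : ∀ j, v j ≤ ∑ i, v i * P i j) :
    ∀ j, ∑ i, v i * P i j = v j := by
  have hsum : ∑ j, v j = ∑ j, ∑ i, v i * P i j := by
    rw [Finset.sum_comm]
    simp_rw [← Finset.mul_sum, hP.2, mul_one]
  have := (Finset.sum_eq_sum_iff_of_le (fun j _ => h j)).mp hsum
  exact fun j => ((this j (Finset.mem_univ j))).symm

lemma pow_entry_nonneg {S : Type*} [Fintype S] [DecidableEq S] (P : Matrix S S ℝ)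
    (hP : RowStochastic P) (k : ℕ) : ∀ i j, 0 ≤ (P ^ k) i j := by
  induction k with
  | zero =>
    intro i j
    simp only [pow_zero, Matrix.one_apply]
    split <;> norm_num
  | succ n ih =>
    intro i j
    rw [pow_succ, Matrix.mul_apply]
    exact Finset.sum_nonneg fun m _ => mul_nonneg (ih i m) (hP.1 m j)

lemma stat_pow {S : Type*} [Fintype S] [DecidableEq S] (P : Matrix S S ℝ)
    (v : S → ℝ) (hv : ∀ j, ∑ i, v i * P i j = v j) (k : ℕ) :
    ∀ j, ∑ i, v i * (P ^ k) i j = v j := by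
  induction k with
  | zero =>
    intro j
    simp [Matrix.one_apply, Finset.sum_ite_eq, mul_comm]
  | succ n ih =>
    intro j
    simp_rw [pow_succ, Matrix.mul_apply, Finset.mul_sum]
    rw [Finset.sum_comm]
    calc ∑ m, ∑ i, v i * ((P ^ n) i m * P m j)
        = ∑ m, (∑ i, v i * (P ^ n) i m) * P m j := by
          congr 1; ext m; rw [Finset.sum_mul]; congr 1; ext i; ring
      _ = ∑ m, v m * P m j := by simp_rw [ih]
      _ = v j := hv j

lemma pos_on_class {S : Type*} [Fintype S] [DecidableEq S] (P : Matrix S S ℝ)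
    (hP : RowStochastic P) (C : Set S) (hC : ClosedClass P C)
    (v : S → ℝ) (hv0 : ∀ i, 0 ≤ v i) (hst : ∀ j, ∑ i, v i * P i j = v j)
    (i₀ : S) (hi₀ : i₀ ∈ C) (hpos : 0 < v i₀) : ∀ j ∈ C, 0 < v j := by
  intro j hj
  obtain ⟨k, -, hk⟩ := hC.2.2 i₀ hi₀ j hj
  calc (0:ℝ) < v i₀ * (P ^ k) i₀ j := mul_pos hpos hk
    _ ≤ ∑ i, v i * (P ^ k) i j :=
        Finset.single_le_sum
          (fun i _ => mul_nonneg (hv0 i) (pow_entry_nonneg P hP k i j)) (Finset.mem_univ i₀)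
    _ = v j := stat_pow P v hst k j

/-- Each closed communicating class `C` carries exactly one stationary distribution
vanishing off `C`, and that distribution is strictly positive on `C`. -/
theorem unique_stationary_on_closed_class
    {S : Type*} [Fintype S] [DecidableEq S] [Nonempty S]
    (P : Matrix S S ℝ) (hP : RowStochastic P)
    (C : Set S) (hC : ClosedClass P C) :
    ∃ π : S → ℝ, (StationaryDist P π ∧ ∀ i ∉ C, π i = 0) ∧
      (∀ i ∈ C, 0 < π i) ∧
      ∀ π' : S → ℝ, StationaryDist P π' ∧ (∀ i ∉ C, π' i = 0) → π' = π := by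
  classical
  obtain ⟨hCne, hclosed, -⟩ := id hC
  haveI : Nonempty ↥C := hCne.to_subtype
  -- restricted matrix
  set Q : Matrix ↥C ↥C ℝ := fun i j => P i j with hQ
  -- rows of Q sum to 1
  have hsub : ∀ (i : S) (f : S → ℝ), (∀ s ∉ C, f s = 0) →
      ∑ s : S, f s = ∑ s : ↥C, f s := by
    intro i f hf
    rw [← Finset.sum_subtype (Finset.univ.filter (· ∈ C))
      (by simp) f]
    refine (Finset.sum_subset (Finset.filter_subset _ _) ?_).symm
    intro x _ hx
    simp only [Finset.mem_filter, Finset.mem_univ, true_and] at hx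
    exact hf x hx
  have hQrow : ∀ i : ↥C, ∑ j : ↥C, Q i j = 1 := by
    intro i
    have := hsub i (fun j => P i j) (fun s hs => hclosed i i.2 s hs)
    rw [← this, hP.2]
  -- the matrix Q - 1 is singular: the all-ones vector is a right kernel vector
  have hdet : (Q - 1).det = 0 := by
    rw [← Matrix.exists_mulVec_eq_zero_iff]
    refine ⟨fun _ => 1, ?_, ?_⟩
    · intro h
      have := congrFun h (Classical.arbitrary ↥C)
      norm_num at this
    · ext i
      simp only [Matrix.mulVec, dotProduct, Matrix.sub_apply, sub_mul, mul_one,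
        Finset.sum_sub_distrib, Pi.zero_apply]
      rw [hQrow i]
      simp [Matrix.one_apply]
  -- hence a nonzero left kernel vector exists
  obtain ⟨w, hw0, hw⟩ := Matrix.exists_vecMul_eq_zero_iff.mpr hdet
  have hwQ : ∀ j : ↥C, ∑ i : ↥C, w i * Q i j = w j := by
    intro j
    have := congrFun hw j
    simp only [Matrix.vecMul, dotProduct, Matrix.sub_apply, mul_sub,
      Finset.sum_sub_distrib, Pi.zero_apply] at this
    have hone : ∑ i : ↥C, w i * (1 : Matrix ↥C ↥C ℝ) i j = w j := by
      simp [Matrix.one_apply, Finset.sum_ite_eq, mul_comm]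
    rw [hone] at this
    linarith
  -- the candidate unnormalized stationary vector
  set v : S → ℝ := fun s => if h : s ∈ C then |w ⟨s, h⟩| else 0 with hv
  have hv0 : ∀ s, 0 ≤ v s := by
    intro s; simp only [hv]; split <;> [exact abs_nonneg _; exact le_rfl]
  have hvoff : ∀ s ∉ C, v s = 0 := by
    intro s hs; simp only [hv]; rw [dif_neg hs]
  have hvsum : ∀ j : S, ∑ i : S, v i * P i j = ∑ i : ↥C, |w i| * P i j := by
    intro j
    rw [hsub j (fun i => v i * P i j) (fun s hs => by show v s * P s j = 0; rw [hvoff s hs, zero_mul])]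
    congr 1; ext i
    simp only [hv, dif_pos i.2]
  -- v is subinvariant hence invariant
  have hvstat : ∀ j, ∑ i, v i * P i j = v j := by
    refine subinv_to_inv P hP v ?_
    intro j
    by_cases hj : j ∈ C
    · rw [hvsum j]
      calc v j = |w ⟨j, hj⟩| := by simp only [hv, dif_pos hj]
        _ = |∑ i : ↥C, w i * Q i ⟨j, hj⟩| := by rw [hwQ ⟨j, hj⟩]
        _ ≤ ∑ i : ↥C, |w i * Q i ⟨j, hj⟩| := Finset.abs_sum_le_sum_abs _ _
        _ = ∑ i : ↥C, |w i| * P i j := by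
            congr 1; ext i
            rw [abs_mul, abs_of_nonneg (hP.1 i j)]
    · rw [hvoff j hj]
      exact Finset.sum_nonneg fun i _ => mul_nonneg (hv0 i) (hP.1 i j)
  -- v is nonzero somewhere, in fact on C
  obtain ⟨i₀, hi₀⟩ := Function.ne_iff.mp hw0
  have hvi₀ : 0 < v (i₀ : S) := by
    simp only [hv, dif_pos i₀.2]
    · have : (⟨(i₀ : S), i₀.2⟩ : ↥C) = i₀ := rfl
      rw [this]
      exact abs_pos.mpr hi₀
  have hT : 0 < ∑ s, v s :=
    Finset.sum_pos' (fun i _ => hv0 i) ⟨i₀, Finset.mem_univ _, hvi₀⟩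
  set T := ∑ s, v s with hTdef
  -- normalized stationary distribution
  refine ⟨fun s => v s / T, ⟨⟨fun i => div_nonneg (hv0 i) hT.le, ?_, ?_⟩, ?_⟩, ?_, ?_⟩
  · rw [← Finset.sum_div, div_self hT.ne']
  · intro j
    simp_rw [div_mul_eq_mul_div, ← Finset.sum_div, hvstat j]
  · intro i hi; show v i / T = 0; rw [hvoff i hi, zero_div]
  · -- positivity on C
    have hstat' : ∀ j, ∑ i, (v i / T) * P i j = v j / T := by
      intro j; simp_rw [div_mul_eq_mul_div, ← Finset.sum_div, hvstat j]
    exact pos_on_class P hP C hC (fun s => v s / T)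
      (fun i => div_nonneg (hv0 i) hT.le) hstat' i₀ i₀.2 (div_pos hvi₀ hT)
  · -- uniqueness
    intro π' ⟨hπ', hπ'off⟩
    by_contra hne
    set d : S → ℝ := fun s => π' s - v s / T with hd
    have hdne : ∃ s, d s ≠ 0 := by
      by_contra h
      push_neg at h
      exact hne (funext fun s => by have := h s; simp only [hd] at this; linarith)
    have hdsum : ∑ s, d s = 0 := by
      simp only [hd, Finset.sum_sub_distrib]
      rw [hπ'.2.1, ← Finset.sum_div, div_self hT.ne']
      ring
    have hdstat : ∀ j, ∑ i, d i * P i j = d j := by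
      intro j
      simp only [hd, sub_mul, Finset.sum_sub_distrib]
      rw [hπ'.2.2 j]
      congr 1
      simp_rw [div_mul_eq_mul_div, ← Finset.sum_div, hvstat j]
    have hdoff : ∀ s ∉ C, d s = 0 := by
      intro s hs; simp only [hd, hπ'off s hs, hvoff s hs]; ring
    -- the positive part of d is subinvariant hence invariant
    set dp : S → ℝ := fun s => max (d s) 0 with hdp
    have hdp0 : ∀ s, 0 ≤ dp s := fun s => le_max_right _ _
    have hdpstat : ∀ j, ∑ i, dp i * P i j = dp j := by
      refine subinv_to_inv P hP dp ?_
      intro j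
      refine max_le ?_ (Finset.sum_nonneg fun i _ => mul_nonneg (hdp0 i) (hP.1 i j))
      rw [← hdstat j]
      exact Finset.sum_le_sum fun i _ =>
        mul_le_mul_of_nonneg_right (le_max_left _ _) (hP.1 i j)
    -- d takes a positive and a negative value
    have hpos : ∃ i, 0 < d i := by
      by_contra h
      push_neg at h
      obtain ⟨s, hs⟩ := hdne
      exact hs ((Finset.sum_eq_zero_iff_of_nonpos (fun i _ => h i)).mp hdsum s
        (Finset.mem_univ s))
    have hneg : ∃ j, d j < 0 := by
      by_contra h
      push_neg at h
      obtain ⟨s, hs⟩ := hdne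
      exact hs ((Finset.sum_eq_zero_iff_of_nonneg (fun i _ => h i)).mp hdsum s
        (Finset.mem_univ s))
    obtain ⟨i₁, hi₁⟩ := hpos
    obtain ⟨j₁, hj₁⟩ := hneg
    have hi₁C : i₁ ∈ C := by
      by_contra h; rw [hdoff i₁ h] at hi₁; exact lt_irrefl _ hi₁
    have hj₁C : j₁ ∈ C := by
      by_contra h; rw [hdoff j₁ h] at hj₁; exact lt_irrefl _ hj₁
    have hdpi₁ : 0 < dp i₁ := lt_of_lt_of_le hi₁ (le_max_left _ _)
    have := pos_on_class P hP C hC dp hdp0 hdpstat i₁ hi₁C hdpi₁ j₁ hj₁C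
    have : dp j₁ = 0 := max_eq_right hj₁.le
    linarith [pos_on_class P hP C hC dp hdp0 hdpstat i₁ hi₁C hdpi₁ j₁ hj₁C]
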